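/- Let X and H be n×n complex Hermitian matrices, let f : ℝ → ℝ be continuously differentiable on an open interval (a,b), and let α₀ ∈ ℝ. Suppose there is ε > 0 such that for every α with |α − α₀| < ε, all eigenvalues of X + αH lie in (a,b). Then the function α ↦ Tr(F(X + αH)) is differentiable at α₀ and its derivative equals Tr(H · F'(X + α₀H)), where F and F' are the matrix extensions of f and f' respectively. -/

import Mathlib

open Matrix

/-- The matrix extension `F` of `f : ℝ → ℝ`: for Hermitian `A = U Diag(λ) U*`,
`F(A) := U Diag(f(λᵢ)) U*` (junk value `0` if `A` is not Hermitian). -/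
noncomputable def matExt {𝕜 : Type*} [RCLike 𝕜] {n : Type*} [Fintype n] [DecidableEq n]
    (f : ℝ → ℝ) (A : Matrix n n 𝕜) : Matrix n n 𝕜 :=
  if hA : A.IsHermitian then
    (hA.eigenvectorUnitary : Matrix n n 𝕜) *
      Matrix.diagonal (fun i => (f (hA.eigenvalues i) : 𝕜)) *
      star (hA.eigenvectorUnitary : Matrix n n 𝕜)
  else 0

/-- The eigenvalues of a Hermitian matrix (junk value `0` if not Hermitian). -/
noncomputable def eigs {𝕜 : Type*} [RCLike 𝕜] {n : Type*} [Fintype n] [DecidableEq n]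
    (A : Matrix n n 𝕜) : n → ℝ :=
  if hA : A.IsHermitian then hA.eigenvalues else 0

noncomputable def Complex.abs : AbsoluteValue ℂ ℝ :=
  IsAbsoluteValue.toAbsoluteValue (norm : ℂ → ℝ)

lemma Complex.abs_apply (z : ℂ) : Complex.abs z = ‖z‖ := rfl

lemma Complex.abs_conj (z : ℂ) : Complex.abs ((starRingEnd ℂ) z) = Complex.abs z := by
  simp [Complex.abs_apply]

lemma Complex.abs_ofReal (x : ℝ) : Complex.abs (x : ℂ) = |x| := by
  simp [Complex.abs_apply]

lemma Complex.sq_abs (z : ℂ) : Complex.abs z ^ 2 = Complex.normSq z := Complex.sq_norm z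

open Polynomial Topology Filter

variable {n : ℕ}

section basic
variable {N : Type*} [Fintype N] [DecidableEq N]

lemma matExt_eq (f : ℝ → ℝ) {A : Matrix N N ℂ} (hA : A.IsHermitian) :
    matExt f A =
    (hA.eigenvectorUnitary : Matrix N N ℂ) *
      Matrix.diagonal (fun i => (f (hA.eigenvalues i) : ℂ)) *
      star (hA.eigenvectorUnitary : Matrix N N ℂ) := dif_pos hA

-- trace of H * (U D U*) as a sum
lemma trace_mul_conj_diag (H' : Matrix N N ℂ) {A : Matrix N N ℂ} (hA : A.IsHermitian)
    (g : N → ℂ) :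
    (H' * ((hA.eigenvectorUnitary : Matrix N N ℂ) * Matrix.diagonal g *
      star (hA.eigenvectorUnitary : Matrix N N ℂ))).trace =
    ∑ i, (star (hA.eigenvectorUnitary : Matrix N N ℂ) * H' *
      (hA.eigenvectorUnitary : Matrix N N ℂ)) i i * g i := by
  set U := (hA.eigenvectorUnitary : Matrix N N ℂ)
  have h1 : (H' * (U * Matrix.diagonal g * star U)).trace
      = ((star U * H' * U) * Matrix.diagonal g).trace := by
    rw [← Matrix.mul_assoc, ← Matrix.mul_assoc, Matrix.trace_mul_comm, ← Matrix.mul_assoc,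
      ← Matrix.mul_assoc]
  rw [h1, Matrix.trace]
  simp [Matrix.mul_diagonal, Matrix.diag]

lemma unitary_entry_abs_le_one {U : Matrix N N ℂ} (hU : star U * U = 1) (i j : N) :
    Complex.abs (U i j) ≤ 1 := by
  have h := congrFun (congrFun hU j) j
  simp only [Matrix.mul_apply, Matrix.one_apply_eq, Matrix.star_apply] at h
  have h2 : ∑ k, Complex.normSq (U k j) = 1 := by
    have := congrArg Complex.re h
    simpa [Complex.mul_re, Complex.normSq_apply] using this
  have h3 : Complex.normSq (U i j) ≤ 1 := by
    rw [← h2]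
    exact Finset.single_le_sum (f := fun k => Complex.normSq (U k j))
      (fun k _ => Complex.normSq_nonneg _) (Finset.mem_univ i)
  have := Complex.sq_abs (U i j)
  nlinarith [Complex.abs.nonneg (U i j)]

lemma conj_entry_abs_le {U H' : Matrix N N ℂ} (hU : star U * U = 1) (i : N) :
    Complex.abs ((star U * H' * U) i i) ≤ ∑ j, ∑ k, Complex.abs (H' j k) := by
  have : (star U * H' * U) i i = ∑ j, ∑ k, (starRingEnd ℂ) (U j i) * H' j k * U k i := by
    simp only [Matrix.mul_apply, Matrix.star_apply, Finset.sum_mul]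
    rw [Finset.sum_comm]
    rfl
  rw [this]
  refine (Complex.abs.sum_le _ _).trans (Finset.sum_le_sum fun j _ =>
    (Complex.abs.sum_le _ _).trans (Finset.sum_le_sum fun k _ => ?_))
  rw [map_mul Complex.abs, map_mul Complex.abs, Complex.abs_conj]
  have h1 := unitary_entry_abs_le_one hU j i
  have h2 := unitary_entry_abs_le_one hU k i
  have h3 := Complex.abs.nonneg (H' j k)
  have h5 := Complex.abs.nonneg (U k i)
  calc Complex.abs (U j i) * Complex.abs (H' j k) * Complex.abs (U k i)
      ≤ Complex.abs (H' j k) * Complex.abs (U k i) :=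
        mul_le_mul_of_nonneg_right (mul_le_of_le_one_left h3 h1) h5
    _ ≤ Complex.abs (H' j k) * 1 := mul_le_mul_of_nonneg_left h2 h3
    _ = Complex.abs (H' j k) := mul_one _

/-- Conjugation by an invertible pair as an `ℝ`-algebra hom. -/
noncomputable def conjAlgHom {u w : Matrix N N ℂ} (h1 : u * w = 1) (h2 : w * u = 1) :
    Matrix N N ℂ →ₐ[ℝ] Matrix N N ℂ where
  toFun B := u * B * w
  map_one' := by show u * 1 * w = 1; rw [Matrix.mul_one]; exact h1
  map_mul' A B := by
    show u * (A * B) * w = (u * A * w) * (u * B * w)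
    simp only [Matrix.mul_assoc]
    rw [← Matrix.mul_assoc w u (B * w), h2, Matrix.one_mul]
  map_zero' := by show u * 0 * w = 0; simp
  map_add' A B := by
    show u * (A + B) * w = u * A * w + u * B * w
    rw [Matrix.mul_add, Matrix.add_mul]
  commutes' r := by
    show u * (algebraMap ℝ (Matrix N N ℂ) r) * w = algebraMap ℝ (Matrix N N ℂ) r
    rw [Algebra.algebraMap_eq_smul_one, Matrix.mul_smul, Matrix.mul_one, Matrix.smul_mul, h1]

lemma aeval_conj (p : ℝ[X]) {u w : Matrix N N ℂ} (h1 : u * w = 1) (h2 : w * u = 1)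
    (A : Matrix N N ℂ) :
    aeval (u * A * w) p = u * aeval A p * w :=
  Polynomial.aeval_algHom_apply (conjAlgHom h1 h2) A p

lemma aeval_diag (p : ℝ[X]) (v : N → ℂ) :
    aeval (Matrix.diagonal v) p = Matrix.diagonal (fun i => aeval (v i) p) := by
  have h := Polynomial.aeval_algHom_apply
    (Matrix.diagonalAlgHom (R := ℝ) (α := ℂ) (n := N) : (N → ℂ) →ₐ[ℝ] Matrix N N ℂ) v p
  simp only [Matrix.diagonalAlgHom_apply] at h
  rw [h]
  exact congrArg Matrix.diagonal (funext fun i =>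
    (Polynomial.aeval_algHom_apply (Pi.evalAlgHom ℝ (fun _ : N => ℂ) i) v p).symm)

lemma eigs_eq {A : Matrix N N ℂ} (hA : A.IsHermitian) : eigs A = hA.eigenvalues := dif_pos hA

lemma matExt_poly {A : Matrix N N ℂ} (hA : A.IsHermitian) (p : ℝ[X]) :
    matExt (fun x => p.eval x) A = aeval A p := by
  set U := (hA.eigenvectorUnitary : Matrix N N ℂ) with hUdef
  have h1 : U * star U = 1 := Unitary.coe_mul_star_self hA.eigenvectorUnitary
  have h2 : star U * U = 1 := Unitary.coe_star_mul_self hA.eigenvectorUnitary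
  rw [matExt_eq _ hA]
  conv_rhs => rw [hA.spectral_theorem, Unitary.conjStarAlgAut_apply]
  rw [aeval_conj p h1 h2, aeval_diag]
  have he : ∀ i : N, aeval ((RCLike.ofReal ∘ hA.eigenvalues) i : ℂ) p
      = ((p.eval (hA.eigenvalues i) : ℝ) : ℂ) := fun i => by
    rw [Function.comp_apply,
      show (RCLike.ofReal (hA.eigenvalues i) : ℂ) = algebraMap ℝ ℂ (hA.eigenvalues i) from rfl,
      Polynomial.aeval_algebraMap_apply_eq_algebraMap_eval]
    rfl
  simp only [he]
  rfl

lemma det_factor {A : Matrix N N ℂ} (hA : A.IsHermitian) (t : ℝ) :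
    Matrix.det ((t : ℂ) • (1 : Matrix N N ℂ) - A) = ∏ i, ((t : ℂ) - hA.eigenvalues i) := by
  set U := (hA.eigenvectorUnitary : Matrix N N ℂ) with hUdef
  have h1 : U * star U = 1 := Unitary.coe_mul_star_self hA.eigenvectorUnitary
  have key : (t : ℂ) • (1 : Matrix N N ℂ) - A
      = U * ((t : ℂ) • (1 : Matrix N N ℂ) - Matrix.diagonal (RCLike.ofReal ∘ hA.eigenvalues))
        * star U := by
    conv_rhs => rw [Matrix.mul_sub, Matrix.sub_mul]
    congr 1
    · rw [Matrix.mul_smul, Matrix.smul_mul, Matrix.mul_one, h1]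
    · exact hA.spectral_theorem.trans (Unitary.conjStarAlgAut_apply _ _)
  rw [key, Matrix.det_mul, Matrix.det_mul, mul_comm, ← mul_assoc, mul_comm (Matrix.det (star U)),
    ← Matrix.det_mul, h1, Matrix.det_one, one_mul]
  rw [Matrix.smul_one_eq_diagonal, Matrix.diagonal_sub, Matrix.det_diagonal]
  rfl

lemma root_iff_eigenvalue {A : Matrix N N ℂ} (hA : A.IsHermitian) (t : ℝ) :
    Matrix.det ((t : ℂ) • (1 : Matrix N N ℂ) - A) = 0 ↔ ∃ i, hA.eigenvalues i = t := by
  rw [det_factor hA t, Finset.prod_eq_zero_iff]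
  constructor
  · rintro ⟨i, -, hi⟩
    exact ⟨i, by exact_mod_cast (sub_eq_zero.mp hi).symm⟩
  · rintro ⟨i, hi⟩
    exact ⟨i, Finset.mem_univ i, by rw [hi]; ring⟩

lemma eigenvalue_abs_le [Nonempty N] {A : Matrix N N ℂ} (hA : A.IsHermitian) (i : N) :
    |hA.eigenvalues i| ≤ ∑ j, ∑ k, Complex.abs (A j k) := by
  set v : N → ℂ := ⇑(hA.eigenvectorBasis i) with hv
  have hv0 : v ≠ 0 := by
    have := hA.eigenvectorBasis.orthonormal.ne_zero i
    intro h
    apply this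
    ext j
    exact congrFun h j
  have hAv : A *ᵥ v = (hA.eigenvalues i : ℂ) • v := by
    have h := hA.mulVec_eigenvectorBasis i
    rw [h]
    funext j
    show hA.eigenvalues i • v j = (hA.eigenvalues i : ℂ) * v j
    rw [Complex.real_smul]
  obtain ⟨j, -, hj⟩ := Finset.exists_max_image Finset.univ (fun k => Complex.abs (v k))
    ⟨Classical.arbitrary N, Finset.mem_univ _⟩
  have hjpos : 0 < Complex.abs (v j) := by
    obtain ⟨k, hk⟩ : ∃ k, v k ≠ 0 := by
      by_contra h; push_neg at h; exact hv0 (funext h)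
    exact lt_of_lt_of_le (AbsoluteValue.pos _ hk) (hj k (Finset.mem_univ k))
  have hrow : (hA.eigenvalues i : ℂ) * v j = ∑ k, A j k * v k := by
    have := congrFun hAv j
    simp only [Matrix.mulVec, dotProduct, Pi.smul_apply, smul_eq_mul] at this
    exact this.symm
  have hb : |hA.eigenvalues i| * Complex.abs (v j) ≤
      (∑ j', ∑ k, Complex.abs (A j' k)) * Complex.abs (v j) := by
    have h1 : Complex.abs ((hA.eigenvalues i : ℂ) * v j) ≤ ∑ k, Complex.abs (A j k * v k) :=
      hrow ▸ Complex.abs.sum_le _ _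
    rw [map_mul Complex.abs, Complex.abs_ofReal] at h1
    have h2 : ∑ k, Complex.abs (A j k * v k) ≤ (∑ k, Complex.abs (A j k)) * Complex.abs (v j) := by
      rw [Finset.sum_mul]
      refine Finset.sum_le_sum fun k _ => ?_
      rw [map_mul Complex.abs]
      exact mul_le_mul_of_nonneg_left (hj k (Finset.mem_univ k)) (Complex.abs.nonneg _)
    have h3 : (∑ k, Complex.abs (A j k)) * Complex.abs (v j)
        ≤ (∑ j', ∑ k, Complex.abs (A j' k)) * Complex.abs (v j) := by
      refine mul_le_mul_of_nonneg_right ?_ (Complex.abs.nonneg _)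
      exact Finset.single_le_sum (f := fun j' => ∑ k, Complex.abs (A j' k))
        (fun j' _ => Finset.sum_nonneg fun k _ => Complex.abs.nonneg _) (Finset.mem_univ j)
    linarith
  exact le_of_mul_le_mul_right hb hjpos

end basic

section derivsec
attribute [local instance] Matrix.linftyOpNormedRing Matrix.linftyOpNormedAlgebra
  Matrix.linftyOpNormedSpace

variable {N : Type*} [Fintype N] [DecidableEq N]

lemma hasDerivAt_M (X H : Matrix N N ℂ) (β : ℝ) :
    HasDerivAt (fun α : ℝ => X + (α : ℂ) • H) H β := by
  have h1 : HasDerivAt (fun α : ℝ => (α : ℂ)) 1 β := by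
    simpa using (hasDerivAt_id β).ofReal_comp
  have h2 := (h1.smul_const H)
  have h3 := h2.const_add X
  rw [one_smul] at h3
  exact h3

lemma hasDerivAt_pow_M (X H : Matrix N N ℂ) (β : ℝ) (k : ℕ) :
    HasDerivAt (fun α : ℝ => (X + (α : ℂ) • H) ^ k)
      (∑ j ∈ Finset.range k,
        (X + (β : ℂ) • H) ^ j * H * (X + (β : ℂ) • H) ^ (k - 1 - j)) β := by
  induction k with
  | zero =>
    simp only [pow_zero, Finset.range_zero, Finset.sum_empty]
    exact hasDerivAt_const β (1 : Matrix N N ℂ)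
  | succ k ih =>
    have h := ih.mul (hasDerivAt_M X H β)
    have he : (∑ j ∈ Finset.range k,
          (X + (β : ℂ) • H) ^ j * H * (X + (β : ℂ) • H) ^ (k - 1 - j)) * (X + (β : ℂ) • H)
        + (X + (β : ℂ) • H) ^ k * H
        = ∑ j ∈ Finset.range (k + 1),
          (X + (β : ℂ) • H) ^ j * H * (X + (β : ℂ) • H) ^ (k + 1 - 1 - j) := by
      rw [Finset.sum_range_succ, Finset.sum_mul]
      congr 1
      · refine Finset.sum_congr rfl fun j hj => ?_
        rw [Finset.mem_range] at hj
        have hexp : k - 1 - j + 1 = k + 1 - 1 - j := by omega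
        rw [mul_assoc, ← pow_succ, hexp]
      · rw [Nat.add_sub_cancel, Nat.sub_self, pow_zero, mul_one]
    simp only [pow_succ]
    exact he ▸ h

noncomputable def traceCLM : Matrix N N ℂ →L[ℝ] ℂ :=
  LinearMap.toContinuousLinearMap ((Matrix.traceLinearMap N ℂ ℂ).restrictScalars ℝ)

omit [DecidableEq N] in
lemma traceCLM_apply (A : Matrix N N ℂ) : traceCLM A = A.trace := rfl

lemma hasDerivAt_trace {m : ℝ → Matrix N N ℂ} {m' : Matrix N N ℂ} {β : ℝ}
    (hm : HasDerivAt m m' β) :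
    HasDerivAt (fun α => (m α).trace) m'.trace β := by
  have := (traceCLM (N := N)).hasFDerivAt.comp_hasDerivAt β hm
  exact this

lemma trace_sum_pow (M H : Matrix N N ℂ) (k : ℕ) :
    (∑ j ∈ Finset.range k, M ^ j * H * M ^ (k - 1 - j)).trace
      = (k : ℂ) * (H * M ^ (k - 1)).trace := by
  rw [Matrix.trace_sum]
  have : ∀ j ∈ Finset.range k, (M ^ j * H * M ^ (k - 1 - j)).trace = (H * M ^ (k-1)).trace := by
    intro j hj
    rw [Finset.mem_range] at hj
    rw [Matrix.trace_mul_comm, ← Matrix.mul_assoc, ← pow_add, Matrix.trace_mul_comm]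
    congr 3
    omega
  rw [Finset.sum_congr rfl this, Finset.sum_const, Finset.card_range, nsmul_eq_mul]

lemma hasDerivAt_trace_aeval (X H : Matrix N N ℂ) (β : ℝ) (p : ℝ[X]) :
    HasDerivAt (fun α : ℝ => (aeval (X + (α : ℂ) • H) p).trace)
      ((H * aeval (X + (β : ℂ) • H) (derivative p)).trace) β := by
  induction p using Polynomial.induction_on' with
  | add p q hp hq =>
    simp only [map_add, Matrix.mul_add, Matrix.trace_add]
    exact hp.add hq
  | monomial k c =>
    have hd : HasDerivAt (fun α : ℝ => ((X + (α : ℂ) • H) ^ k).trace)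
        ((k : ℂ) * (H * (X + (β : ℂ) • H) ^ (k - 1)).trace) β := by
      have := hasDerivAt_trace (hasDerivAt_pow_M X H β k)
      rwa [trace_sum_pow] at this
    have hsm := hd.const_smul c
    simp only [Polynomial.aeval_monomial, Polynomial.derivative_monomial, ← Algebra.smul_def,
      Matrix.trace_smul, mul_smul_comm]
    convert hsm using 1
    · rfl
    · rfl
    rw [Complex.real_smul, Complex.real_smul]
    push_cast
    ring

end derivsec

noncomputable def pAnti (q : ℝ[X]) : ℝ[X] := q.sum fun k a => C (a / (k + 1)) * X ^ (k + 1)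

lemma derivative_pAnti (q : ℝ[X]) : derivative (pAnti q) = q := by
  rw [pAnti, Polynomial.sum_def, map_sum]
  have h : ∀ k ∈ q.support,
      derivative (C (q.coeff k / (k + 1 : ℝ)) * X ^ (k + 1)) = C (q.coeff k) * X ^ k := by
    intro k _
    rw [Polynomial.derivative_C_mul_X_pow, Nat.add_sub_cancel]
    push_cast
    rw [div_mul_cancel₀ _ (by positivity : ((k : ℝ) + 1) ≠ 0)]
  rw [Finset.sum_congr rfl h]
  conv_rhs => rw [← Polynomial.sum_C_mul_X_pow_eq q]
  rw [Polynomial.sum_def]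

lemma poly_approx_C1 {c d : ℝ} {f g' : ℝ → ℝ}
    (hder : ∀ x ∈ Set.Icc c d, HasDerivAt f (g' x) x)
    {q : ℝ[X]} {e : ℝ} (he : ∀ x ∈ Set.Icc c d, |q.eval x - g' x| ≤ e) :
    ∃ P : ℝ[X], derivative P = q ∧ ∀ x ∈ Set.Icc c d, |P.eval x - f x| ≤ e * (d - c) := by
  set P : ℝ[X] := pAnti q + C (f c - (pAnti q).eval c) with hP
  have hdP : derivative P = q := by
    rw [hP, derivative_add, derivative_C, add_zero, derivative_pAnti]
  refine ⟨P, hdP, fun x hx => ?_⟩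
  have hcd : c ≤ d := hx.1.trans hx.2
  have hcmem : c ∈ Set.Icc c d := Set.left_mem_Icc.mpr hcd
  have hg : ∀ y ∈ Set.Icc c d,
      HasDerivWithinAt (fun z => P.eval z - f z) (q.eval y - g' y) (Set.Icc c d) y := by
    intro y hy
    have h1 : HasDerivAt (fun z => P.eval z) ((derivative P).eval y) y := Polynomial.hasDerivAt P y
    rw [hdP] at h1
    exact ((h1.sub (hder y hy)).hasDerivWithinAt)
  have hb : ∀ y ∈ Set.Icc c d, ‖q.eval y - g' y‖ ≤ e := fun y hy => he y hy
  have key := (convex_Icc c d).norm_image_sub_le_of_norm_hasDerivWithin_le hg hb hcmem hx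
  have hPc : P.eval c = f c := by simp [hP]
  rw [hPc, sub_self, sub_zero] at key
  calc |P.eval x - f x| ≤ e * ‖x - c‖ := key
    _ ≤ e * (d - c) := by
      have h0 : (0:ℝ) ≤ e := le_trans (abs_nonneg _) (he c hcmem)
      refine mul_le_mul_of_nonneg_left ?_ h0
      rw [Real.norm_eq_abs, abs_of_nonneg (by linarith [hx.1])]
      linarith [hx.2]

lemma exists_compact_interval {n : ℕ} (hn : 0 < n) (X H : Matrix (Fin n) (Fin n) ℂ)
    (hM : ∀ α : ℝ, (X + (α : ℂ) • H).IsHermitian) (a b α₀ ε : ℝ) (hε : 0 < ε)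
    (hspec : ∀ α : ℝ, |α - α₀| < ε → ∀ i, (hM α).eigenvalues i ∈ Set.Ioo a b) :
    ∃ c d : ℝ, Set.Icc c d ⊆ Set.Ioo a b ∧
      ∀ α : ℝ, |α - α₀| ≤ ε / 2 → ∀ i, (hM α).eigenvalues i ∈ Set.Icc c d := by
  haveI : Nonempty (Fin n) := ⟨⟨0, hn⟩⟩
  set B := Set.Icc (α₀ - ε / 2) (α₀ + ε / 2) with hB
  have hmemB : ∀ α : ℝ, |α - α₀| ≤ ε / 2 ↔ α ∈ B := by
    intro α; rw [hB, Set.mem_Icc, abs_sub_le_iff]; constructor <;> intro h <;>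
      constructor <;> linarith [h.1, h.2]
  set S : Set (ℝ × ℝ) := {q | q.1 ∈ B ∧
    Matrix.det ((q.2 : ℂ) • (1 : Matrix (Fin n) (Fin n) ℂ) - (X + (q.1 : ℂ) • H)) = 0} with hS
  have hSchar : ∀ q : ℝ × ℝ, q ∈ S ↔ q.1 ∈ B ∧ ∃ i, (hM q.1).eigenvalues i = q.2 := by
    intro q
    rw [hS, Set.mem_setOf_eq, root_iff_eigenvalue (hM q.1) q.2]
  have hScl : IsClosed S := by
    have hc : Continuous fun q : ℝ × ℝ =>
        Matrix.det ((q.2 : ℂ) • (1 : Matrix (Fin n) (Fin n) ℂ) - (X + (q.1 : ℂ) • H)) := by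
      refine Continuous.matrix_det ?_
      refine Continuous.sub ?_ ?_
      · exact (Complex.continuous_ofReal.comp continuous_snd).smul continuous_const
      · exact continuous_const.add
          ((Complex.continuous_ofReal.comp continuous_fst).smul continuous_const)
    exact (isClosed_Icc.preimage continuous_fst).inter (isClosed_singleton.preimage hc)
  set R : ℝ := (∑ j, ∑ k, Complex.abs (X j k)) +
    (|α₀| + ε) * (∑ j, ∑ k, Complex.abs (H j k)) with hR
  have hbound : ∀ α : ℝ, α ∈ B → ∀ i, |(hM α).eigenvalues i| ≤ R := by
    intro α hα i
    refine (eigenvalue_abs_le (hM α) i).trans ?_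
    have hent : ∀ j k, Complex.abs ((X + (α : ℂ) • H) j k)
        ≤ Complex.abs (X j k) + (|α₀| + ε) * Complex.abs (H j k) := by
      intro j k
      have : (X + (α : ℂ) • H) j k = X j k + (α : ℂ) * H j k := by
        simp [Matrix.add_apply, Matrix.smul_apply, smul_eq_mul]
      rw [this]
      refine (Complex.abs.add_le _ _).trans ?_
      rw [map_mul Complex.abs, Complex.abs_ofReal]
      have hαb : |α| ≤ |α₀| + ε := by
        rw [hB, Set.mem_Icc] at hα
        rw [abs_le]
        constructor <;> [skip; skip] <;> cases abs_le.mp (le_refl |α₀|) <;> nlinarith [abs_nonneg α₀, le_abs_self α₀, neg_abs_le α₀, hα.1, hα.2, hε]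
      have := Complex.abs.nonneg (H j k)
      nlinarith [Complex.abs.nonneg (X j k)]
    calc ∑ j, ∑ k, Complex.abs ((X + (α : ℂ) • H) j k)
        ≤ ∑ j, ∑ k, (Complex.abs (X j k) + (|α₀| + ε) * Complex.abs (H j k)) :=
          Finset.sum_le_sum fun j _ => Finset.sum_le_sum fun k _ => hent j k
      _ = R := by rw [hR]; simp [Finset.sum_add_distrib, Finset.mul_sum]
  have hSsub : S ⊆ B ×ˢ Set.Icc (-R) R := by
    rintro ⟨α, t⟩ hq
    obtain ⟨hα, i, hit⟩ := (hSchar _).mp hq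
    exact ⟨hα, abs_le.mp (hit ▸ hbound α hα i)⟩
  have hScomp : IsCompact S := (isCompact_Icc.prod isCompact_Icc).of_isClosed_subset hScl hSsub
  set K : Set ℝ := Prod.snd '' S with hK
  have hKcomp : IsCompact K := hScomp.image continuous_snd
  have hKsub : K ⊆ Set.Ioo a b := by
    rintro t ⟨⟨α, t'⟩, hq, rfl⟩
    obtain ⟨hα, i, hit⟩ := (hSchar _).mp hq
    have hlt : |α - α₀| < ε := lt_of_le_of_lt ((hmemB α).mpr hα) (by linarith)
    exact hit ▸ hspec α hlt i
  have hKne : K.Nonempty := by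
    refine ⟨(hM α₀).eigenvalues ⟨0, hn⟩, ⟨(α₀, _), (hSchar _).mpr ⟨?_, ⟨⟨0, hn⟩, rfl⟩⟩, rfl⟩⟩
    rw [← hmemB]
    simp only [sub_self, abs_zero]
    linarith
  have hdmem := hKcomp.sSup_mem hKne
  have hcmem := hKcomp.sInf_mem hKne
  refine ⟨sInf K, sSup K, ?_, ?_⟩
  · intro x hx
    exact ⟨lt_of_lt_of_le (hKsub hcmem).1 hx.1, lt_of_le_of_lt hx.2 (hKsub hdmem).2⟩
  · intro α hα i
    have hmem : (hM α).eigenvalues i ∈ K :=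
      ⟨(α, _), (hSchar _).mpr ⟨(hmemB α).mp hα, ⟨i, rfl⟩⟩, rfl⟩
    exact ⟨csInf_le hKcomp.bddBelow hmem, le_csSup hKcomp.bddAbove hmem⟩

lemma trace_matExt_sum {N : Type*} [Fintype N] [DecidableEq N] (g : ℝ → ℝ)
    {A : Matrix N N ℂ} (hA : A.IsHermitian) :
    (matExt g A).trace = ∑ i, ((g (hA.eigenvalues i) : ℝ) : ℂ) := by
  rw [matExt_eq g hA]
  set U := (hA.eigenvectorUnitary : Matrix N N ℂ)
  have h2 : star U * U = 1 := Unitary.coe_star_mul_self hA.eigenvectorUnitary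
  rw [Matrix.trace_mul_comm, ← Matrix.mul_assoc, h2, Matrix.one_mul, Matrix.trace_diagonal]

lemma hermM (X H : Matrix (Fin n) (Fin n) ℂ) (hX : X.IsHermitian) (hH : H.IsHermitian)
    (α : ℝ) : (X + (α : ℂ) • H).IsHermitian := by
  refine hX.add ?_
  unfold Matrix.IsHermitian
  rw [Matrix.conjTranspose_smul, hH.eq, Complex.star_def, Complex.conj_ofReal]

/-- If `X, H` are Hermitian, `f` is `C¹` on `(a,b)`, and all eigenvalues of `X + αH`
lie in `(a,b)` for `α` near `α₀`, then `α ↦ Tr F(X + αH)` is differentiable at `α₀`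
with derivative `Tr(H ⬝ F'(X + α₀ H))`. -/
theorem trace_matExt_hasDerivAt {n : ℕ} (X H : Matrix (Fin n) (Fin n) ℂ)
    (hX : X.IsHermitian) (hH : H.IsHermitian)
    (a b : ℝ) (f : ℝ → ℝ) (hf : ContDiffOn ℝ 1 f (Set.Ioo a b))
    (α₀ : ℝ)
    (hspec : ∃ ε > 0, ∀ α : ℝ, |α - α₀| < ε →
      ∀ i, eigs (X + (α : ℂ) • H) i ∈ Set.Ioo a b) :
    HasDerivAt (fun α : ℝ => (matExt f (X + (α : ℂ) • H)).trace)
      ((H * matExt (deriv f) (X + (α₀ : ℂ) • H)).trace) α₀ := by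
  rcases Nat.eq_zero_or_pos n with hn0 | hn
  · subst hn0
    have h0 : ∀ A : Matrix (Fin 0) (Fin 0) ℂ, A.trace = 0 := fun A => by
      simp [Matrix.trace]
    simp only [h0]
    exact hasDerivAt_const α₀ 0
  obtain ⟨ε, hε, hsp⟩ := hspec
  have hM : ∀ α : ℝ, (X + (α : ℂ) • H).IsHermitian := hermM X H hX hH
  have hsp' : ∀ α : ℝ, |α - α₀| < ε → ∀ i, (hM α).eigenvalues i ∈ Set.Ioo a b := by
    intro α hα i
    have h := hsp α hα i
    rwa [eigs_eq (hM α)] at h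
  obtain ⟨c, d, hIcc, heig⟩ := exists_compact_interval hn X H hM a b α₀ ε hε hsp'
  have hfd : ∀ x ∈ Set.Ioo a b, HasDerivAt f (deriv f x) x := by
    intro x hx
    exact ((hf.differentiableOn one_ne_zero).differentiableAt (isOpen_Ioo.mem_nhds hx)).hasDerivAt
  have hfc : ContinuousOn (deriv f) (Set.Ioo a b) := by
    have h := hf.continuousOn_derivWithin isOpen_Ioo.uniqueDiffOn le_rfl
    exact h.congr fun x hx => (derivWithin_of_isOpen isOpen_Ioo hx).symm
  have hq : ∀ m : ℕ, ∃ qm : ℝ[X],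
      ∀ x ∈ Set.Icc c d, |qm.eval x - deriv f x| ≤ 1 / (m + 1) := by
    intro m
    obtain ⟨qm, hqm⟩ := exists_polynomial_near_of_continuousOn c d (deriv f)
      (hfc.mono hIcc) (1 / (m + 1)) (by positivity)
    exact ⟨qm, fun x hx => (hqm x hx).le⟩
  choose q hqe using hq
  have hPex : ∀ m : ℕ, ∃ P : ℝ[X], derivative P = q m ∧
      ∀ x ∈ Set.Icc c d, |P.eval x - f x| ≤ (1 / (m + 1)) * (d - c) :=
    fun m => poly_approx_C1 (fun x hx => hfd x (hIcc hx)) (hqe m)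
  choose P hPd hPe using hPex
  set s : Set ℝ := Metric.ball α₀ (ε / 2) with hsdef
  have hmem : ∀ α ∈ s, |α - α₀| ≤ ε / 2 := fun α hα =>
    le_of_lt (by rwa [hsdef, Metric.mem_ball, Real.dist_eq] at hα)
  set CH : ℝ := ∑ j, ∑ k, Complex.abs (H j k) with hCH
  have hCH0 : 0 ≤ CH :=
    Finset.sum_nonneg fun j _ => Finset.sum_nonneg fun k _ => Complex.abs.nonneg _
  have hdiffbound : ∀ m : ℕ, ∀ α ∈ s,
      Complex.abs ((H * matExt (deriv f) (X + (α : ℂ) • H)).trace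
        - (H * matExt (fun x => (q m).eval x) (X + (α : ℂ) • H)).trace)
        ≤ (n : ℝ) * (CH * (1 / (m + 1))) := by
    intro m α hα
    have hA := hM α
    have hsu : star (hA.eigenvectorUnitary : Matrix (Fin n) (Fin n) ℂ) *
        (hA.eigenvectorUnitary : Matrix (Fin n) (Fin n) ℂ) = 1 :=
      Unitary.coe_star_mul_self hA.eigenvectorUnitary
    rw [matExt_eq _ hA, matExt_eq _ hA, trace_mul_conj_diag H hA _, trace_mul_conj_diag H hA _,
      ← Finset.sum_sub_distrib]
    refine (Complex.abs.sum_le _ _).trans ?_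
    have hterm : ∀ i, Complex.abs
        ((star (hA.eigenvectorUnitary : Matrix (Fin n) (Fin n) ℂ) * H *
            (hA.eigenvectorUnitary : Matrix (Fin n) (Fin n) ℂ)) i i *
            ((deriv f (hA.eigenvalues i) : ℝ) : ℂ)
          - (star (hA.eigenvectorUnitary : Matrix (Fin n) (Fin n) ℂ) * H *
            (hA.eigenvectorUnitary : Matrix (Fin n) (Fin n) ℂ)) i i *
            (((q m).eval (hA.eigenvalues i) : ℝ) : ℂ)) ≤ CH * (1 / (m + 1)) := by
      intro i
      rw [← mul_sub, map_mul Complex.abs]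
      have h1 := conj_entry_abs_le (H' := H) hsu i
      have h2 : Complex.abs (((deriv f (hA.eigenvalues i) : ℝ) : ℂ)
          - (((q m).eval (hA.eigenvalues i) : ℝ) : ℂ)) ≤ 1 / (m + 1) := by
        rw [← Complex.ofReal_sub, Complex.abs_ofReal, abs_sub_comm]
        exact hqe m _ (heig α (hmem α hα) i)
      exact mul_le_mul h1 h2 (Complex.abs.nonneg _) hCH0
    refine (Finset.sum_le_sum fun i _ => hterm i).trans ?_
    rw [Finset.sum_const, Finset.card_univ, Fintype.card_fin, nsmul_eq_mul]
  refine hasDerivAt_of_tendstoUniformlyOn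
    (f := fun m (α : ℝ) => (aeval (X + (α : ℂ) • H) (P m)).trace)
    (f' := fun m (α : ℝ) => (H * matExt (fun x => (q m).eval x) (X + (α : ℂ) • H)).trace)
    (g := fun α : ℝ => (matExt f (X + (α : ℂ) • H)).trace)
    (g' := fun α : ℝ => (H * matExt (deriv f) (X + (α : ℂ) • H)).trace)
    (l := Filter.atTop) Metric.isOpen_ball ?_ ?_ ?_ (Metric.mem_ball_self (half_pos hε))
  · rw [Metric.tendstoUniformlyOn_iff]
    intro δ hδ
    have htend : Filter.Tendsto (fun m : ℕ => (n : ℝ) * (CH * (1 / (m + 1))))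
        Filter.atTop (𝓝 0) := by
      have h := tendsto_one_div_add_atTop_nhds_zero_nat.const_mul ((n : ℝ) * CH)
      rw [mul_zero] at h
      simpa [mul_assoc] using h
    filter_upwards [htend.eventually_lt_const hδ] with m hm α hα
    rw [dist_eq_norm]
    exact lt_of_le_of_lt (hdiffbound m α hα) hm
  · refine Filter.Eventually.of_forall fun m => fun α hα => ?_
    have h := hasDerivAt_trace_aeval X H α (P m)
    rw [hPd m, ← matExt_poly (hM α) (q m)] at h
    exact h
  · intro α hα
    rw [tendsto_iff_dist_tendsto_zero]
    have hb : ∀ m : ℕ, dist ((aeval (X + (α : ℂ) • H) (P m)).trace)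
        ((matExt f (X + (α : ℂ) • H)).trace) ≤ (n : ℝ) * ((1 / (m + 1)) * (d - c)) := by
      intro m
      rw [dist_eq_norm]
      have h1 : (aeval (X + (α : ℂ) • H) (P m)).trace
          = ∑ i, (((P m).eval ((hM α).eigenvalues i) : ℝ) : ℂ) := by
        rw [← matExt_poly (hM α) (P m), trace_matExt_sum _ (hM α)]
      have h2 : (matExt f (X + (α : ℂ) • H)).trace
          = ∑ i, ((f ((hM α).eigenvalues i) : ℝ) : ℂ) := trace_matExt_sum f (hM α)
      rw [h1, h2, ← Finset.sum_sub_distrib]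
      refine le_trans (Complex.abs.sum_le _ _) ?_
      have hterm : ∀ i, Complex.abs ((((P m).eval ((hM α).eigenvalues i) : ℝ) : ℂ)
          - ((f ((hM α).eigenvalues i) : ℝ) : ℂ)) ≤ (1 / (m + 1)) * (d - c) := fun i => by
        rw [← Complex.ofReal_sub, Complex.abs_ofReal]
        exact hPe m _ (heig α (hmem α hα) i)
      refine (Finset.sum_le_sum fun i _ => hterm i).trans ?_
      rw [Finset.sum_const, Finset.card_univ, Fintype.card_fin, nsmul_eq_mul]
    refine squeeze_zero (fun m => dist_nonneg) hb ?_
    have h := tendsto_one_div_add_atTop_nhds_zero_nat.const_mul ((n : ℝ) * (d - c))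
    rw [mul_zero] at h
    refine h.congr fun m => ?_
    ring
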